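/- (Theorem T1, tree form) Let V be a finite type, f : V → V, and v0 : V with f v0 = v0 and f v ≠ v for every v ≠ v0. Suppose every vertex of V is weakly connected to v0. Define the simple graph G on V by: u and v are adjacent iff u ≠ v and (f u = v or f v = u). Then G is a tree (connected and acyclic); i.e., the sdTCC transition digraph is a rooted tree with all arcs oriented towards the root v0. -/

import Mathlib

/-- Theorem T1 (tree form): the underlying undirected graph of a connected sdTCC
transition digraph is a tree (rooted at the target `v0`, arcs oriented towards it). -/
theorem sdTCC_connected_isTree {V : Type*} [Finite V] (f : V → V) (v0 : V)
    (h0 : f v0 = v0) (hnl : ∀ v, v ≠ v0 → f v ≠ v)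
    (hconn : ∀ v, Relation.EqvGen (fun a b => f a = b) v v0) :
    (SimpleGraph.mk (fun u v => u ≠ v ∧ (f u = v ∨ f v = u))
      ⟨fun u v h => ⟨h.1.symm, h.2.symm⟩⟩
      ⟨fun u h => h.1 rfl⟩).IsTree := by
  classical
  set G : SimpleGraph V := SimpleGraph.mk (fun u v => u ≠ v ∧ (f u = v ∨ f v = u))
      ⟨fun u v h => ⟨h.1.symm, h.2.symm⟩⟩
      ⟨fun u h => h.1 rfl⟩ with hG
  -- every vertex reaches v0 by iterating f
  have key : ∀ v w, Relation.EqvGen (fun a b => f a = b) v w →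
      ((∃ n, f^[n] v = v0) ↔ (∃ n, f^[n] w = v0)) := by
    intro v w h
    induction h with
    | rel a b hab =>
      constructor
      · rintro ⟨n, hn⟩
        cases n with
        | zero =>
          simp only [Function.iterate_zero, id] at hn
          subst hn
          exact ⟨0, by simpa [hab] using h0.symm ▸ (by rw [← hab, h0])⟩
        | succ m =>
          refine ⟨m, ?_⟩
          rw [Function.iterate_succ_apply] at hn
          rwa [hab] at hn
      · rintro ⟨n, hn⟩
        exact ⟨n + 1, by rw [Function.iterate_succ_apply, hab]; exact hn⟩
    | refl a => exact Iff.rfl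
    | symm a b _ ih => exact ih.symm
    | trans a b c _ _ ih1 ih2 => exact ih1.trans ih2
  have hre : ∀ v, ∃ n, f^[n] v = v0 := fun v => (key v v0 (hconn v)).mpr ⟨0, rfl⟩
  -- depth function
  set d : V → ℕ := fun v => Nat.find (hre v) with hd
  have hd_spec : ∀ v, f^[d v] v = v0 := fun v => Nat.find_spec (hre v)
  have hd0 : ∀ v, d v = 0 → v = v0 := by
    intro v hv
    have := hd_spec v
    rwa [hv, Function.iterate_zero, id] at this
  have hdstep : ∀ u, u ≠ v0 → d u = d (f u) + 1 := by
    intro u hu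
    have hne : d u ≠ 0 := fun h => hu (hd0 u h)
    obtain ⟨m, hm⟩ := Nat.exists_eq_succ_of_ne_zero hne
    have h1 : f^[m] (f u) = v0 := by
      have h' := hd_spec u
      rw [hm, Function.iterate_succ_apply] at h'
      exact h'
    have h2 : d (f u) ≤ m := Nat.find_le h1
    have h3 : d u ≤ d (f u) + 1 := Nat.find_le (by
      rw [Function.iterate_succ_apply]; exact hd_spec (f u))
    omega
  -- orientation: an edge towards smaller-or-equal depth goes along f
  have orient : ∀ u v, G.Adj u v → d v ≤ d u → f u = v := by
    intro u v huv hle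
    rcases huv.2 with h | h
    · exact h
    · exfalso
      have hv0 : v ≠ v0 := by
        intro hv; apply huv.1; rw [← h, hv, h0]
      have := hdstep v hv0
      rw [h] at this
      omega
  -- connectivity
  have hreach : ∀ (n : ℕ) (v : V), f^[n] v = v0 → G.Reachable v v0 := by
    intro n
    induction n with
    | zero =>
      intro v hv
      simp only [Function.iterate_zero, id] at hv
      subst hv
      exact SimpleGraph.Reachable.refl _
    | succ n ih =>
      intro v hv
      by_cases h : v = v0
      · subst h; exact SimpleGraph.Reachable.refl _
      · have hadj : G.Adj v (f v) := ⟨(hnl v h).symm, Or.inl rfl⟩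
        exact hadj.reachable.trans (ih (f v) (by rwa [Function.iterate_succ_apply] at hv))
  have hconn' : G.Connected := by
    rw [SimpleGraph.connected_iff]
    refine ⟨fun u v => ?_, ⟨v0⟩⟩
    obtain ⟨n, hn⟩ := hre u
    obtain ⟨m, hm⟩ := hre v
    exact (hreach n u hn).trans (hreach m v hm).symm
  refine ⟨hconn', ?_⟩
  -- acyclicity: contradiction at a max-depth vertex of a cycle
  have main : ∀ (m : V) (c : G.Walk m m), c.IsCycle →
      (∀ x ∈ c.support, d x ≤ d m) → False := by
    intro m c hc hmax
    cases c with
    | nil => exact hc.not_of_nil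
    | @cons _ b _ h p =>
      have hb : f m = b := orient m b h (hmax b (by
        simp [SimpleGraph.Walk.support_cons, p.start_mem_support]))
      obtain ⟨x, hx, q, hq⟩ := SimpleGraph.Walk.exists_eq_cons_of_ne h.ne p.reverse
      have hxmem : x ∈ p.support := by
        have : x ∈ p.reverse.support := by
          rw [hq]; simp [SimpleGraph.Walk.support_cons, q.start_mem_support]
        rwa [SimpleGraph.Walk.support_reverse, List.mem_reverse] at this
      have hxm : f m = x := orient m x hx (hmax x (by
        simp [SimpleGraph.Walk.support_cons, hxmem]))
      have hbx : x = b := by rw [← hb, ← hxm]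
      have hedge : s(m, x) ∈ p.edges := by
        have : s(m, x) ∈ p.reverse.edges := by
          rw [hq, SimpleGraph.Walk.edges_cons]; exact List.mem_cons_self
        rwa [SimpleGraph.Walk.edges_reverse, List.mem_reverse] at this
      rw [hbx] at hedge
      have hnodup := hc.edges_nodup
      rw [SimpleGraph.Walk.edges_cons, List.nodup_cons] at hnodup
      exact hnodup.1 hedge
  intro a c hc
  obtain ⟨m, hm, hmax⟩ := c.support.toFinset.exists_max_image d
    ⟨a, by simp [c.start_mem_support]⟩
  rw [List.mem_toFinset] at hm
  refine main m (c.rotate m hm) (hc.rotate hm) ?_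
  intro x hx
  rw [SimpleGraph.Walk.support_eq_cons] at hx
  rcases List.mem_cons.mp hx with rfl | hx
  · exact le_refl _
  · have : x ∈ c.support.tail := (SimpleGraph.Walk.support_rotate c m hm).mem_iff.mp hx
    exact hmax x (List.mem_toFinset.mpr (List.mem_of_mem_tail this))
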